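/- If (i,j) ∈ ℤ², d ∈ ℝ, the affine function f(x,y) = ix + jy + d is nonnegative on an open set U ⊆ ℝ², and K ⊆ U is compact with distance R > 0 to the complement of U, then f(x,y) ≥ R·√(i² + j²) for all (x,y) ∈ K. -/

import Mathlib

/-- If the affine function `f(x,y) = ix+jy+d` is nonnegative on an open set `U ⊆ ℝ²`
and `K ⊆ U` is compact at distance at least `R > 0` from the complement of `U`,
then `f ≥ R·√(i²+j²)` on `K`. -/
theorem stmt_1 (U : Set (EuclideanSpace ℝ (Fin 2))) (hU : IsOpen U)
    (K : Set (EuclideanSpace ℝ (Fin 2))) (hK : IsCompact K) (hKU : K ⊆ U)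
    (i j : ℤ) (d : ℝ)
    (hpos : ∀ p ∈ U, 0 ≤ (i : ℝ) * p 0 + (j : ℝ) * p 1 + d)
    (R : ℝ) (hR : 0 < R) (hdist : ∀ p ∈ K, ∀ q, q ∉ U → R ≤ dist p q) :
    ∀ p ∈ K, R * Real.sqrt ((i : ℝ) ^ 2 + (j : ℝ) ^ 2) ≤ (i : ℝ) * p 0 + (j : ℝ) * p 1 + d := by
  intro p hp
  set n : ℝ := Real.sqrt ((i : ℝ) ^ 2 + (j : ℝ) ^ 2) with hn
  have hn2 : n ^ 2 = (i : ℝ) ^ 2 + (j : ℝ) ^ 2 := by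
    rw [hn, Real.sq_sqrt (by positivity)]
  have hF0 : 0 ≤ (i : ℝ) * p 0 + (j : ℝ) * p 1 + d := hpos p (hKU hp)
  rcases eq_or_lt_of_le (hn ▸ Real.sqrt_nonneg ((i : ℝ) ^ 2 + (j : ℝ) ^ 2) : (0:ℝ) ≤ n) with h0 | hnpos
  · rw [← h0, mul_zero]; exact hF0
  -- key: for 0 ≤ t < R, t * n ≤ f(p)
  have key : ∀ t : ℝ, 0 ≤ t → t < R →
      t * n ≤ (i : ℝ) * p 0 + (j : ℝ) * p 1 + d := by
    intro t ht htR
    set w : EuclideanSpace ℝ (Fin 2) := !₂[(i : ℝ), (j : ℝ)] with hw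
    have hwnorm : ‖w‖ = n := by
      rw [EuclideanSpace.norm_eq]
      simp [hw, Fin.sum_univ_two, Real.norm_eq_abs, sq_abs, hn]
    set q : EuclideanSpace ℝ (Fin 2) := p - (t / n) • w with hq
    have hdq : dist p q = t := by
      rw [dist_eq_norm, hq]
      have : p - (p - (t / n) • w) = (t / n) • w := by abel
      rw [this, norm_smul, hwnorm, Real.norm_eq_abs,
        abs_of_nonneg (by positivity), div_mul_cancel₀ _ (ne_of_gt hnpos)]
    have hqU : q ∈ U := by
      by_contra hqU
      have := hdist p hp q hqU
      rw [hdq] at this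
      linarith
    have hq0 : q 0 = p 0 - (t / n) * (i : ℝ) := by
      simp [hq, hw]
    have hq1 : q 1 = p 1 - (t / n) * (j : ℝ) := by
      simp [hq, hw]
    have := hpos q hqU
    rw [hq0, hq1] at this
    have hexp : (i : ℝ) * (p 0 - t / n * (i : ℝ)) + (j : ℝ) * (p 1 - t / n * (j : ℝ)) + d
        = (i : ℝ) * p 0 + (j : ℝ) * p 1 + d - (t / n) * ((i : ℝ) ^ 2 + (j : ℝ) ^ 2) := by
      ring
    rw [hexp, ← hn2] at this
    have : (t / n) * n ^ 2 = t * n := by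
      field_simp
    linarith [this ▸ ‹0 ≤ (i : ℝ) * p 0 + (j : ℝ) * p 1 + d - t / n * n ^ 2›]
  by_contra hcon
  push_neg at hcon
  set F := (i : ℝ) * p 0 + (j : ℝ) * p 1 + d with hF
  have ht1 : 0 ≤ (F / n + R) / 2 := by positivity
  have ht2 : (F / n + R) / 2 < R := by
    have : F / n < R := by
      rw [div_lt_iff₀ hnpos]
      linarith [mul_comm R n]
    linarith
  have := key _ ht1 ht2
  have hFn : F / n * n = F := div_mul_cancel₀ _ (ne_of_gt hnpos)
  nlinarith
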